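/- Let F_λ(s) = ∫₀^∞ (1+λt)^(−s/λ) f(t) dt. Then for n ∈ ℕ, under suitable convergence/integrability hypotheses permitting differentiation under the integral sign, the degenerate Laplace transform of (log(1+λt))^n f(t) equals (−1)^n λ^n (d/ds)^n F_λ(s). In particular, L_λ((1+λt)^(a/λ) (log(1+λt))^n) = λ^n n! / (s−a−λ)^(n+1) for s > a + λ. -/

import Mathlib

open MeasureTheory Set

section DegLaplaceAux
open Real

-- weight is continuous/measurable on Ioi 0
lemma dL_aesm (l : ℝ) (hl : 0 < l) (s : ℝ) (m : ℕ) :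
    AEStronglyMeasurable (fun t : ℝ => (1+l*t)^(-(s/l)) * (Real.log (1+l*t))^m)
      (volume.restrict (Ioi 0)) := by
  apply ContinuousOn.aestronglyMeasurable _ measurableSet_Ioi
  apply ContinuousOn.mul
  · apply ContinuousOn.rpow_const (by fun_prop)
    intro t ht; simp only [mem_Ioi] at ht; left; nlinarith
  · apply ContinuousOn.pow
    apply ContinuousOn.log (by fun_prop)
    intro t ht; simp only [mem_Ioi] at ht; nlinarith

lemma dL_aesm' (l : ℝ) (hl : 0 < l) (f : ℝ → ℝ)
    (hfm : AEStronglyMeasurable f (volume.restrict (Ioi 0))) (s : ℝ) (m : ℕ) :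
    AEStronglyMeasurable (fun t : ℝ => (1+l*t)^(-(s/l)) * (Real.log (1+l*t))^m * f t)
      (volume.restrict (Ioi 0)) :=
  (dL_aesm l hl s m).mul hfm

lemma dL_int (l : ℝ) (hl : 0 < l) (f : ℝ → ℝ)
    (hfm : AEStronglyMeasurable f (volume.restrict (Ioi 0))) (s : ℝ) (m : ℕ)
    (h : IntegrableOn (fun t => (1 + l * t) ^ (-(s / l)) * (Real.log (1 + l * t)) ^ m * |f t|)
      (Ioi 0)) :
    IntegrableOn (fun t => (1 + l * t) ^ (-(s / l)) * (Real.log (1 + l * t)) ^ m * f t)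
      (Ioi 0) := by
  apply h.mono' (dL_aesm' l hl f hfm s m)
  filter_upwards [ae_restrict_mem measurableSet_Ioi] with t ht
  simp only [mem_Ioi] at ht
  have h1 : (0:ℝ) ≤ (1+l*t)^(-(s/l)) := Real.rpow_nonneg (by nlinarith) _
  have h2 : (0:ℝ) ≤ Real.log (1+l*t) := Real.log_nonneg (by nlinarith)
  rw [Real.norm_eq_abs, abs_mul, abs_mul, abs_of_nonneg h1, abs_pow, abs_of_nonneg h2]

-- key derivative lemma
lemma dL_hasDerivAt (l : ℝ) (hl : 0 < l) (f : ℝ → ℝ)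
    (hfm : AEStronglyMeasurable f (volume.restrict (Ioi 0))) (m : ℕ) (s₀ : ℝ)
    (hint : ∀ s : ℝ, ∀ k, k = m ∨ k = m + 1 →
      IntegrableOn (fun t => (1 + l * t) ^ (-(s / l)) * (Real.log (1 + l * t)) ^ k * |f t|)
        (Ioi 0)) :
    HasDerivAt (fun s => ∫ t in Ioi (0:ℝ),
        (1 + l * t) ^ (-(s / l)) * (Real.log (1 + l * t)) ^ m * f t)
      (-(1/l) * ∫ t in Ioi (0:ℝ),
        (1 + l * t) ^ (-(s₀ / l)) * (Real.log (1 + l * t)) ^ (m+1) * f t) s₀ := by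
  have key := hasDerivAt_integral_of_dominated_loc_of_deriv_le (μ := volume.restrict (Ioi 0))
    (F := fun s t => (1 + l * t) ^ (-(s / l)) * (Real.log (1 + l * t)) ^ m * f t)
    (F' := fun s t => -(1/l) * ((1 + l * t) ^ (-(s / l)) * (Real.log (1 + l * t)) ^ (m+1) * f t))
    (x₀ := s₀) (s := Metric.ball s₀ 1)
    (bound := fun t => (1/l) * ((1 + l * t) ^ (-((s₀-1) / l)) * (Real.log (1 + l * t)) ^ (m+1) * |f t|))
    (Metric.ball_mem_nhds s₀ one_pos)
    (Filter.Eventually.of_forall fun s => dL_aesm' l hl f hfm s m)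
    (dL_int l hl f hfm s₀ m (hint s₀ m (Or.inl rfl)))
    ((dL_aesm' l hl f hfm s₀ (m+1)).const_mul _)
    ?_ ?_ ?_
  · rw [MeasureTheory.integral_const_mul] at key
    exact key.2
  · -- bound
    filter_upwards [ae_restrict_mem measurableSet_Ioi] with t ht
    intro s hs
    simp only [mem_Ioi] at ht
    simp only [Metric.mem_ball, Real.dist_eq] at hs
    have hbase : (1:ℝ) ≤ 1 + l*t := by nlinarith
    have h2 : (0:ℝ) ≤ Real.log (1+l*t) := Real.log_nonneg hbase
    have hw : (0:ℝ) ≤ (1+l*t)^(-(s/l)) := Real.rpow_nonneg (by linarith) _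
    have hmono : (1+l*t)^(-(s/l)) ≤ (1+l*t)^(-((s₀-1)/l)) := by
      apply Real.rpow_le_rpow_of_exponent_le hbase
      have h3 : s₀ - 1 ≤ s := by
        rcases abs_lt.mp hs with ⟨h4, h5⟩; linarith
      exact neg_le_neg (by gcongr)
    rw [Real.norm_eq_abs, abs_mul, abs_mul, abs_mul, abs_pow, abs_of_nonneg hw,
      abs_of_nonneg h2, abs_neg, abs_of_nonneg (le_of_lt (one_div_pos.mpr hl))]

    have hnn : (0:ℝ) ≤ Real.log (1+l*t) ^ (m+1) * |f t| := by positivity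
    calc 1/l * ((1+l*t)^(-(s/l)) * Real.log (1+l*t)^(m+1) * |f t|)
        = 1/l * ((1+l*t)^(-(s/l)) * (Real.log (1+l*t)^(m+1) * |f t|)) := by ring
      _ ≤ 1/l * ((1+l*t)^(-((s₀-1)/l)) * (Real.log (1+l*t)^(m+1) * |f t|)) := by
          apply mul_le_mul_of_nonneg_left (mul_le_mul_of_nonneg_right hmono hnn)
          positivity
      _ = 1/l * ((1+l*t)^(-((s₀-1)/l)) * Real.log (1+l*t)^(m+1) * |f t|) := by ring
  · -- bound integrable
    exact (hint (s₀-1) (m+1) (Or.inr rfl)).const_mul _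
  · -- differentiability
    filter_upwards [ae_restrict_mem measurableSet_Ioi] with t ht
    intro s hs
    simp only [mem_Ioi] at ht
    have hbase : (0:ℝ) < 1 + l*t := by nlinarith
    have hrw : ∀ u : ℝ, (1+l*t)^(-(u/l)) = Real.exp (Real.log (1+l*t) * -(u/l)) := fun u =>
      Real.rpow_def_of_pos hbase _
    have hid : HasDerivAt (fun u : ℝ => -(u/l)) (-(1/l)) s := by
      simpa using ((hasDerivAt_id' s).div_const l).fun_neg
    have hd : HasDerivAt (fun u : ℝ => Real.log (1+l*t) * -(u/l))
        (Real.log (1+l*t) * -(1/l)) s := hid.const_mul _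
    have h1 := (hd.exp).mul_const ((Real.log (1+l*t))^m * f t)
    have heq : (fun u : ℝ => Real.exp (Real.log (1+l*t) * -(u/l)) * ((Real.log (1+l*t))^m * f t))
        = fun u : ℝ => (1+l*t)^(-(u/l)) * (Real.log (1+l*t))^m * f t := by
      funext u; rw [hrw u]; ring
    rw [heq] at h1
    refine h1.congr_deriv ?_
    rw [hrw s, pow_succ]; ring

lemma dL_iter (l : ℝ) (hl : 0 < l) (f : ℝ → ℝ)
    (hfm : AEStronglyMeasurable f (volume.restrict (Ioi 0))) (n : ℕ)
    (hint : ∀ s : ℝ, ∀ m ≤ n,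
      IntegrableOn (fun t => (1 + l * t) ^ (-(s / l)) * (Real.log (1 + l * t)) ^ m * |f t|)
        (Ioi 0)) :
    ∀ m, m ≤ n → ∀ s : ℝ,
      iteratedDeriv m (fun s => ∫ t in Ioi (0:ℝ), (1 + l * t) ^ (-(s / l)) * f t) s
        = (-(1/l))^m * ∫ t in Ioi (0:ℝ),
            (1 + l * t) ^ (-(s / l)) * (Real.log (1 + l * t)) ^ m * f t := by
  intro m
  induction m with
  | zero =>
    intro _ s
    simp [iteratedDeriv_zero]
  | succ m ih =>
    intro hm s
    have hm' : m ≤ n := le_trans (Nat.le_succ m) hm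
    rw [iteratedDeriv_succ]
    have hfun : iteratedDeriv m (fun s => ∫ t in Ioi (0:ℝ), (1 + l * t) ^ (-(s / l)) * f t)
        = fun s => (-(1/l))^m * ∫ t in Ioi (0:ℝ),
            (1 + l * t) ^ (-(s / l)) * (Real.log (1 + l * t)) ^ m * f t :=
      funext (fun s' => ih hm' s')
    rw [hfun]
    have hd := (dL_hasDerivAt l hl f hfm m s (fun s' k hk => by
      rcases hk with rfl | rfl
      · exact hint s' _ (by omega)
      · exact hint s' _ (by omega))).const_mul ((-(1/l))^m)
    rw [hd.deriv, pow_succ]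
    ring

lemma dL_iter_zero (n : ℕ) (s : ℝ) : iteratedDeriv n (fun _ : ℝ => (0:ℝ)) s = 0 := by
  induction n generalizing s with
  | zero => simp
  | succ m ih =>
    rw [iteratedDeriv_succ']
    simp only [deriv_const']
    exact ih s

end DegLaplaceAux

theorem degLaplace_log_pow (l : ℝ) (hl : 0 < l) (n : ℕ) :
    (∀ (f : ℝ → ℝ) (F : ℝ → ℝ),
      (F = fun s => ∫ t in Ioi (0 : ℝ), (1 + l * t) ^ (-(s / l)) * f t) →
      -- integrability hypothesis permitting differentiation under the integral sign
      (∀ s : ℝ, ∀ m ≤ n,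
        IntegrableOn (fun t => (1 + l * t) ^ (-(s / l)) * (Real.log (1 + l * t)) ^ m * |f t|)
          (Ioi 0)) →
      ∀ s : ℝ,
        ∫ t in Ioi (0 : ℝ), (1 + l * t) ^ (-(s / l)) * ((Real.log (1 + l * t)) ^ n * f t) =
          (-1) ^ n * l ^ n * iteratedDeriv n F s) ∧
    (∀ a s : ℝ, a + l < s →
      ∫ t in Ioi (0 : ℝ),
          (1 + l * t) ^ (-(s / l)) * ((1 + l * t) ^ (a / l) * (Real.log (1 + l * t)) ^ n) =
        l ^ n * n.factorial / (s - a - l) ^ (n + 1)) := by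
  constructor
  · intro f F hF hint
    by_cases hfm : AEStronglyMeasurable f (volume.restrict (Ioi 0))
    · intro s
      subst hF
      rw [dL_iter l hl f hfm n hint n le_rfl s]
      have hcoef : (-1:ℝ)^n * l^n * (-(1/l))^n = 1 := by
        rw [← mul_pow, ← mul_pow, show (-1:ℝ) * l * (-(1/l)) = 1 by field_simp]
        exact one_pow n
      have hassoc : (∫ t in Ioi (0:ℝ), (1+l*t)^(-(s/l)) * ((Real.log (1+l*t))^n * f t))
          = ∫ t in Ioi (0:ℝ), (1+l*t)^(-(s/l)) * (Real.log (1+l*t))^n * f t := by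
        simp_rw [mul_assoc]
      rw [hassoc, ← mul_assoc, hcoef, one_mul]
    · intro s
      have hzero : ∀ s' : ℝ, (∫ t in Ioi (0:ℝ), (1+l*t)^(-(s'/l)) * f t) = 0 := by
        intro s'
        apply integral_undef
        intro hi
        apply hfm
        have hA := hi.1
        have hw : AEStronglyMeasurable (fun t : ℝ => ((1+l*t)^(-(s'/l)))⁻¹)
            (volume.restrict (Ioi 0)) := by
          have h0 := dL_aesm l hl s' 0
          simp only [pow_zero, mul_one] at h0
          exact aestronglyMeasurable_iff_aemeasurable.mpr
            (aestronglyMeasurable_iff_aemeasurable.mp h0).inv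
        apply (hw.mul hA).congr
        filter_upwards [ae_restrict_mem measurableSet_Ioi] with t ht
        simp only [mem_Ioi] at ht
        have hne : (1+l*t)^(-(s'/l)) ≠ 0 := ne_of_gt (Real.rpow_pos_of_pos (by nlinarith) _)
        exact inv_mul_cancel_left₀ hne (f t)
      have hFz : F = fun _ => (0:ℝ) := by
        rw [hF]; funext s'; exact hzero s'
      rw [hFz, dL_iter_zero n s, mul_zero]
      apply integral_undef
      intro hi
      apply hfm
      have hA := hi.1
      have hw : AEStronglyMeasurable
          (fun t : ℝ => ((1+l*t)^(-(s/l)) * (Real.log (1+l*t))^n)⁻¹)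
          (volume.restrict (Ioi 0)) :=
        aestronglyMeasurable_iff_aemeasurable.mpr
          (aestronglyMeasurable_iff_aemeasurable.mp (dL_aesm l hl s n)).inv
      apply (hw.mul hA).congr
      filter_upwards [ae_restrict_mem measurableSet_Ioi] with t ht
      simp only [mem_Ioi] at ht
      have h1 : (1+l*t)^(-(s/l)) ≠ 0 := ne_of_gt (Real.rpow_pos_of_pos (by nlinarith) _)
      have h2 : Real.log (1+l*t) ≠ 0 := ne_of_gt (Real.log_pos (by nlinarith))
      show ((1+l*t)^(-(s/l)) * (Real.log (1+l*t))^n)⁻¹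
          * ((1+l*t)^(-(s/l)) * ((Real.log (1+l*t))^n * f t)) = f t
      rw [← mul_assoc ((1+l*t)^(-(s/l)))]
      exact inv_mul_cancel_left₀ (mul_ne_zero h1 (pow_ne_zero n h2)) (f t)
  · intro a s h
    have hb : (0:ℝ) < (s - a - l) / l := div_pos (by linarith) hl
    have himg : Ioi (0:ℝ) = (fun x => (Real.exp x - 1) / l) '' Ioi 0 := by
      ext t
      constructor
      · intro ht
        simp only [mem_Ioi] at ht
        refine ⟨Real.log (1 + l * t), ?_, ?_⟩
        · simp only [mem_Ioi]
          apply Real.log_pos; nlinarith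
        · show (Real.exp (Real.log (1 + l * t)) - 1) / l = t
          rw [Real.exp_log (by nlinarith)]; field_simp; ring
      · rintro ⟨x, hx, rfl⟩
        simp only [mem_Ioi] at hx ⊢
        have h1 : 1 < Real.exp x := by
          calc (1:ℝ) = Real.exp 0 := by simp
          _ < Real.exp x := Real.exp_lt_exp.mpr hx
        exact div_pos (by linarith) hl
    have hder : ∀ x ∈ Ioi (0:ℝ), HasDerivWithinAt (fun x => (Real.exp x - 1) / l)
        (Real.exp x / l) (Ioi 0) x := by
      intro x hx
      exact (((Real.hasDerivAt_exp x).sub_const 1).div_const l).hasDerivWithinAt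
    have hinj : InjOn (fun x => (Real.exp x - 1) / l) (Ioi 0) := by
      intro x hx y hy hxy
      simp only [div_eq_div_iff hl.ne' hl.ne'] at hxy
      field_simp at hxy
      exact Real.exp_injective (by linarith)
    rw [himg, integral_image_eq_integral_abs_deriv_smul measurableSet_Ioi hder hinj]
    have hcongr : ∀ x ∈ Ioi (0:ℝ),
        |Real.exp x / l| • ((1 + l * ((Real.exp x - 1)/l)) ^ (-(s / l)) *
          ((1 + l * ((Real.exp x - 1)/l)) ^ (a / l) * (Real.log (1 + l * ((Real.exp x - 1)/l))) ^ n)) =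
        (1/l) * (x ^ (((n:ℝ)+1) - 1) * Real.exp (-((s - a - l)/l * x))) := by
      intro x hx
      simp only [mem_Ioi] at hx
      have hbase : 1 + l * ((Real.exp x - 1)/l) = Real.exp x := by field_simp; ring
      rw [hbase, smul_eq_mul, abs_of_pos (by positivity), Real.log_exp,
        ← Real.exp_mul, ← Real.exp_mul,
        show ((n:ℝ)+1) - 1 = (n:ℝ) by ring, Real.rpow_natCast]
      have hexp : Real.exp x * (Real.exp (x * -(s/l)) * Real.exp (x*(a/l)))
          = Real.exp (-((s-a-l)/l * x)) := by
        rw [← Real.exp_add, ← Real.exp_add]; congr 1; field_simp; ring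
      calc Real.exp x / l * (Real.exp (x * -(s/l)) * (Real.exp (x*(a/l)) * x ^ n))
          = (x^n / l) * (Real.exp x * (Real.exp (x * -(s/l)) * Real.exp (x*(a/l)))) := by ring
        _ = (x^n / l) * Real.exp (-((s-a-l)/l * x)) := by rw [hexp]
        _ = 1/l * (x ^ n * Real.exp (-((s - a - l)/l * x))) := by ring
    rw [setIntegral_congr_fun measurableSet_Ioi hcongr, MeasureTheory.integral_const_mul,
      Real.integral_rpow_mul_exp_neg_mul_Ioi (by positivity) hb]
    have hc : ((1:ℝ)/((s-a-l)/l)) ^ ((n:ℝ)+1) = (1/((s-a-l)/l)) ^ ((n+1:ℕ)) := by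
      rw [← Real.rpow_natCast]; push_cast; ring_nf
    have hg : Real.Gamma ((n:ℝ)+1) = n.factorial := by
      exact_mod_cast Real.Gamma_nat_eq_factorial n
    rw [hc, hg, one_div_div, div_pow]
    have hsa : s - a - l ≠ 0 := by intro h0; linarith [(by linarith : a + l < s)]
    field_simp
    ring
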